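/- Let G = ([n], E) be a DAG with weights w ∈ ℝ^E and weight matrix C, fix an edge j→i ∈ E, and let C' be the matrix obtained from C by setting the entry c_ij to ∞ (i.e., the weight matrix of the DAG G with the edge j→i deleted). Then Q(C) = Q(C') if and only if j→i ∉ G^♭_w. -/

import Mathlib

open scoped Classical
noncomputable section

/-- The min-plus tropical semiring `T = ℝ ∪ {∞}` with `⊕ = min` and `⊙ = +`. -/
abbrev Trop : Type := WithTop ℝ

/-- Min-plus identity matrix: `0` on the diagonal, `∞` off the diagonal. -/
def mpId {n : ℕ} : Matrix (Fin n) (Fin n) Trop := fun i j => if i = j then 0 else ⊤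

/-- Min-plus matrix product. -/
def mpMul {n : ℕ} (A B : Matrix (Fin n) (Fin n) Trop) : Matrix (Fin n) (Fin n) Trop :=
  fun i j => Finset.univ.inf fun k => A i k + B k j

/-- Entrywise minimum (tropical sum) of matrices. -/
def mpAdd {n : ℕ} (A B : Matrix (Fin n) (Fin n) Trop) : Matrix (Fin n) (Fin n) Trop :=
  fun i j => A i j ⊓ B i j

/-- Min-plus matrix power. -/
def mpPow {n : ℕ} (A : Matrix (Fin n) (Fin n) Trop) : ℕ → Matrix (Fin n) (Fin n) Trop
  | 0 => mpId
  | k + 1 => mpMul (mpPow A k) A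

/-- Kleene star `A* = I ⊕ A ⊕ A^{⊙2} ⊕ ⋯ ⊕ A^{⊙(n−1)}`. -/
def kleene {n : ℕ} (A : Matrix (Fin n) (Fin n) Trop) : Matrix (Fin n) (Fin n) Trop :=
  fun i j => (Finset.range n).inf fun k => mpPow A k i j

/-- `p` is a directed path from `j` to `i` in the digraph with edge relation `E`
(`E a b` meaning there is an edge `a → b`), recorded as its list of vertices. -/
def IsPathFrom {n : ℕ} (E : Fin n → Fin n → Prop) (j i : Fin n) (p : List (Fin n)) : Prop :=
  p.head? = some j ∧ p.getLast? = some i ∧ p.Chain' E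

/-- A digraph is acyclic if the only paths from a vertex to itself are trivial. -/
def IsDAG {n : ℕ} (E : Fin n → Fin n → Prop) : Prop :=
  ∀ (j : Fin n) (p : List (Fin n)), IsPathFrom E j j p → p.length ≤ 1

/-- `C ∈ T^{n×n}` is supported on the digraph `E` : zero diagonal, and for `i ≠ j`
the entry `c_ij` is finite exactly when `j → i` is an edge. -/
def SupportedOn {n : ℕ} (C : Matrix (Fin n) (Fin n) Trop) (E : Fin n → Fin n → Prop) : Prop :=
  (∀ i, C i i = 0) ∧ ∀ i j, i ≠ j → (C i j ≠ ⊤ ↔ E j i)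

/-- The edge weight function of a weight matrix: `cw C a b = c_{ba}` is the weight of
the edge `a → b`. -/
def cw {n : ℕ} (C : Matrix (Fin n) (Fin n) Trop) : Fin n → Fin n → ℝ :=
  fun a b => WithTop.untopD 0 (C b a)

/-- Total weight of a path (sum of the weights of its consecutive edges). -/
def pathWeight {n : ℕ} (w : Fin n → Fin n → ℝ) (p : List (Fin n)) : ℝ :=
  ((p.zip p.tail).map fun q => w q.1 q.2).sum

/-- The edge `j → i` belongs to the weighted transitive reduction `G^♭_w`:
the single edge is the unique minimum-weight directed path from `j` to `i`. -/
def InWTR {n : ℕ} (E : Fin n → Fin n → Prop) (w : Fin n → Fin n → ℝ) (j i : Fin n) : Prop :=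
  E j i ∧ ∀ p : List (Fin n), IsPathFrom E j i p → p ≠ [j, i] → w j i < pathWeight w p

/-- Weighted digraph polyhedron `Q(C) = {x : x_i − x_j ≤ c_ij}` (as the saturated
subset of `ℝ^n` representing a subset of `ℝ^n/ℝ𝟙`). -/
def wdp {n : ℕ} (C : Matrix (Fin n) (Fin n) Trop) : Set (Fin n → ℝ) :=
  {x | ∀ i j, i ≠ j → ((x i - x j : ℝ) : Trop) ≤ C i j}

/-- The tropical polyhedron generated by the columns of `V`: all min-plus linear
combinations `V ⊙ λ`, `λ ∈ ℝ^n` (as a saturated subset of `ℝ^d`). -/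
def tconvM {d n : ℕ} (V : Matrix (Fin d) (Fin n) Trop) : Set (Fin d → ℝ) :=
  {x | ∃ lam : Fin n → ℝ, ∀ i, (x i : Trop) = Finset.univ.inf fun j => V i j + (lam j : Trop)}

/-- `v` is reachable from `s`. -/
def Reaches {n : ℕ} (E : Fin n → Fin n → Prop) (s v : Fin n) : Prop :=
  ∃ p, IsPathFrom E s v p

/-- Edges of the transitive closure `G*`: `j → i` with `i ≠ j` reachable from `j`. -/
def EStar {n : ℕ} (E : Fin n → Fin n → Prop) (j i : Fin n) : Prop :=
  j ≠ i ∧ ∃ p, IsPathFrom E j i p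

/-- The matrix obtained from `C` by setting the entry `c_ij` to `∞` (deleting the
edge `j → i`). -/
def delEdge {n : ℕ} (C : Matrix (Fin n) (Fin n) Trop) (i j : Fin n) :
    Matrix (Fin n) (Fin n) Trop :=
  fun a b => if a = i ∧ b = j then ⊤ else C a b

section Stmt5Aux

variable {n : ℕ}

lemma pathWeight_nil (w : Fin n → Fin n → ℝ) : pathWeight w [] = 0 := rfl

lemma pathWeight_single (w : Fin n → Fin n → ℝ) (a : Fin n) : pathWeight w [a] = 0 := rfl

lemma pathWeight_cons (w : Fin n → Fin n → ℝ) (a b : Fin n) (l : List (Fin n)) :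
    pathWeight w (a :: b :: l) = w a b + pathWeight w (b :: l) := by
  simp [pathWeight]

lemma tele (x : Fin n → ℝ) (w : Fin n → Fin n → ℝ) :
    ∀ (p : List (Fin n)) (a b : Fin n), p.head? = some a → p.getLast? = some b →
      p.Chain' (fun u v => x v - x u ≤ w u v) → x b - x a ≤ pathWeight w p
  | [], a, b, h1, _, _ => by simp at h1
  | [c], a, b, h1, h2, _ => by
      simp only [List.head?_cons, Option.some.injEq] at h1
      simp only [List.getLast?_singleton, Option.some.injEq] at h2
      subst h1; subst h2; simp [pathWeight_single]
  | c :: d :: l, a, b, h1, h2, hc => by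
      simp only [List.head?_cons, Option.some.injEq] at h1
      subst h1
      rw [List.getLast?_cons_cons] at h2
      simp only [List.Chain', List.isChain_cons_cons] at hc
      have ih := tele x w (d :: l) d b rfl h2 hc.2
      rw [pathWeight_cons]
      linarith [hc.1]

lemma pathWeight_concat (w : Fin n → Fin n → ℝ) :
    ∀ (p : List (Fin n)) (a b : Fin n), p.getLast? = some a →
      pathWeight w (p ++ [b]) = pathWeight w p + w a b
  | [], a, b, h => by simp at h
  | [c], a, b, h => by
      simp only [List.getLast?_singleton, Option.some.injEq] at h
      subst h
      simp [pathWeight_cons, pathWeight_single, pathWeight_nil]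
  | c :: d :: l, a, b, h => by
      rw [List.getLast?_cons_cons] at h
      have ih := pathWeight_concat w (d :: l) a b h
      simp only [List.cons_append] at ih ⊢
      rw [pathWeight_cons, pathWeight_cons, ih]
      ring

lemma isPathFrom_ne_nil {E : Fin n → Fin n → Prop} {j i : Fin n} {p : List (Fin n)}
    (h : IsPathFrom E j i p) : p ≠ [] := by
  rintro rfl; simp [IsPathFrom] at h

lemma isPathFrom_single (E : Fin n → Fin n → Prop) (v : Fin n) : IsPathFrom E v v [v] :=
  ⟨rfl, rfl, List.isChain_singleton v⟩

lemma isPathFrom_concat {E : Fin n → Fin n → Prop} {s a b : Fin n} {p : List (Fin n)}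
    (h : IsPathFrom E s a p) (hab : E a b) : IsPathFrom E s b (p ++ [b]) := by
  obtain ⟨h1, h2, hc⟩ := h
  have hne : p ≠ [] := by rintro rfl; simp at h1
  refine ⟨?_, List.getLast?_concat, ?_⟩
  · rw [List.head?_append_of_ne_nil _ hne]; exact h1
  · simp only [List.Chain', List.isChain_append]
    refine ⟨hc, List.isChain_singleton _, ?_⟩
    intro u hu v hv
    simp only [List.head?_cons, Option.mem_def, Option.some.injEq] at hv
    rw [Option.mem_def, h2] at hu
    obtain rfl : a = u := by injection hu
    subst hv
    exact hab

lemma reaches_refl (E : Fin n → Fin n → Prop) (v : Fin n) : Reaches E v v :=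
  ⟨[v], isPathFrom_single E v⟩

lemma reaches_step {E : Fin n → Fin n → Prop} {s a b : Fin n} (h : Reaches E s a)
    (hab : E a b) : Reaches E s b := by
  obtain ⟨p, hp⟩ := h
  exact ⟨p ++ [b], isPathFrom_concat hp hab⟩

lemma not_reaches_rev {E : Fin n → Fin n → Prop} (hdag : IsDAG E) {a b : Fin n}
    (hab : E a b) : ¬ Reaches E b a := by
  rintro ⟨p, hp⟩
  have h2 := isPathFrom_concat hp hab
  have hl := hdag b _ h2
  simp only [List.length_append, List.length_singleton] at hl
  have := isPathFrom_ne_nil hp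
  have : 0 < p.length := List.length_pos_iff.mpr this
  omega

lemma dag_irrefl {E : Fin n → Fin n → Prop} (hdag : IsDAG E) (u : Fin n) : ¬ E u u := by
  intro h
  have hpath : IsPathFrom E u u [u, u] := ⟨rfl, rfl, by simp [List.Chain', h]⟩
  simpa using hdag u _ hpath

lemma edge_ne {E : Fin n → Fin n → Prop} (hdag : IsDAG E) {a b : Fin n} (h : E a b) :
    a ≠ b := by
  rintro rfl; exact dag_irrefl hdag a h

lemma subpath {E : Fin n → Fin n → Prop} {p : List (Fin n)} (hc : p.Chain' E)
    {k l : ℕ} (hkl : k ≤ l) (hl : l < p.length) :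
    ∃ q, IsPathFrom E (p[k]'(lt_of_le_of_lt hkl hl)) (p[l]'hl) q ∧ q.length = l - k + 1 := by
  refine ⟨(p.drop k).take (l - k + 1), ⟨?_, ?_, (hc.drop k).take _⟩, ?_⟩
  · rw [List.head?_eq_getElem?, List.getElem?_take_of_lt (by omega),
      List.getElem?_drop, List.getElem?_eq_getElem (by omega)]
    congr 1
  · have hlen : ((p.drop k).take (l - k + 1)).length = l - k + 1 := by
      rw [List.length_take, List.length_drop]; omega
    rw [List.getLast?_eq_getElem?, hlen]
    simp only [Nat.add_sub_cancel]
    rw [List.getElem?_take_of_lt (by omega), List.getElem?_drop,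
      show k + (l - k) = l from by omega, List.getElem?_eq_getElem hl]
  · rw [List.length_take, List.length_drop]; omega

lemma dag_getElem_ne {E : Fin n → Fin n → Prop} (hdag : IsDAG E) {p : List (Fin n)}
    (hc : p.Chain' E) {k l : ℕ} (hkl : k < l) (hl : l < p.length) :
    p[k]'(lt_trans hkl hl) ≠ p[l]'hl := by
  intro heq
  obtain ⟨q, hq, hqlen⟩ := subpath hc (le_of_lt hkl) hl
  rw [heq] at hq
  have := hdag _ q hq
  omega

lemma dag_nodup {E : Fin n → Fin n → Prop} (hdag : IsDAG E) {p : List (Fin n)}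
    (hc : p.Chain' E) : p.Nodup := by
  rw [List.nodup_iff_injective_get]
  intro a b hab
  by_contra hne
  rcases lt_or_gt_of_ne (Fin.val_ne_of_ne hne) with h | h
  · exact dag_getElem_ne hdag hc h b.isLt (by simpa [List.get_eq_getElem] using hab)
  · exact dag_getElem_ne hdag hc h a.isLt (by simpa [List.get_eq_getElem] using hab.symm)

lemma chain'_del {E : Fin n → Fin n → Prop} (hdag : IsDAG E) {j i : Fin n}
    {p : List (Fin n)} (hp : IsPathFrom E j i p) (hne : p ≠ [j, i]) :
    p.Chain' (fun a b => E a b ∧ ¬(a = j ∧ b = i)) := by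
  obtain ⟨h1, h2, hc⟩ := hp
  have hlenpos : 0 < p.length := List.length_pos_iff.mpr (by rintro rfl; simp at h1)
  have hp0 : p[0]'hlenpos = j := by
    rw [List.head?_eq_getElem?, List.getElem?_eq_getElem hlenpos] at h1
    injection h1
  have hplast : p[p.length - 1]'(by omega) = i := by
    rw [List.getLast?_eq_getElem?, List.getElem?_eq_getElem (by omega)] at h2
    injection h2
  simp only [List.Chain'] at hc ⊢
  rw [List.isChain_iff_getElem] at hc ⊢
  intro k hk
  refine ⟨hc k hk, ?_⟩
  rintro ⟨hkj, hki⟩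
  -- k must be 0
  have hk0 : k = 0 := by
    by_contra h0
    exact dag_getElem_ne hdag (List.isChain_iff_getElem.mpr hc) (Nat.pos_of_ne_zero h0) (by omega)
      (hp0.trans hkj.symm)
  -- k+1 must be length - 1
  have hk1 : k + 1 = p.length - 1 := by
    by_contra h1'
    exact dag_getElem_ne hdag (List.isChain_iff_getElem.mpr hc) (lt_of_le_of_ne (by omega) h1')
      (by omega) (hki.trans hplast.symm)
  have hlen2 : p.length = 2 := by omega
  apply hne
  subst hk0
  rcases p with _ | ⟨a, _ | ⟨b, _ | ⟨c, l⟩⟩⟩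
  · simp at hlen2
  · simp at hlen2
  · simp only [List.getElem_cons_zero, List.getElem_cons_succ] at hkj hki
    rw [hkj, hki]
  · simp at hlen2 <;> omega

lemma coe_untop'_eq (t : Trop) (h : t ≠ ⊤) : ((WithTop.untopD 0 t : ℝ) : Trop) = t := by
  induction t using WithTop.recTopCoe with
  | top => exact absurd rfl h
  | coe r => rfl

end Stmt5Aux

lemma exists_sep {n : ℕ} (E : Fin n → Fin n → Prop) (C : Matrix (Fin n) (Fin n) Trop)
    (hdag : IsDAG E) (hsupp : SupportedOn C E) (i j : Fin n) (he : E j i)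
    (hwtr : InWTR E (cw C) j i) :
    ∃ x : Fin n → ℝ, x ∈ wdp (delEdge C i j) ∧ x ∉ wdp C := by
  classical
  set w : Fin n → Fin n → ℝ := cw C with hw
  set E' : Fin n → Fin n → Prop := fun a b => E a b ∧ ¬(a = j ∧ b = i) with hE'
  have hsub : ∀ ⦃a b : Fin n⦄, E' a b → E a b := fun a b h => h.1
  have hpsub : ∀ {u v : Fin n} {p : List (Fin n)}, IsPathFrom E' u v p → IsPathFrom E u v p :=
    fun h => ⟨h.1, h.2.1, h.2.2.imp hsub⟩
  -- finiteness of path sets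
  have hfin : ∀ v : Fin n, {p : List (Fin n) | IsPathFrom E' j v p}.Finite := by
    intro v
    apply (List.finite_length_le (Fin n) n).subset
    intro p hp
    have hnd : p.Nodup := dag_nodup hdag (hpsub hp).2.2
    simpa using hnd.length_le_card
  set S : Fin n → Set ℝ := fun v => pathWeight w '' {p | IsPathFrom E' j v p} with hS
  have hSfin : ∀ v, (S v).Finite := fun v => (hfin v).image _
  set R : Fin n → Prop := fun v => Reaches E' j v with hR
  set d : Fin n → ℝ := fun v => sInf (S v) with hd
  have hmem : ∀ v, R v → ∃ p, IsPathFrom E' j v p ∧ pathWeight w p = d v := by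
    intro v hv
    obtain ⟨p0, hp0⟩ := hv
    have hne : (S v).Nonempty := ⟨pathWeight w p0, Set.mem_image_of_mem _ hp0⟩
    exact hne.csInf_mem (hSfin v)
  have hle : ∀ v p, IsPathFrom E' j v p → d v ≤ pathWeight w p := fun v p hp =>
    csInf_le (hSfin v).bddBelow (Set.mem_image_of_mem _ hp)
  -- weight bound
  set W : ℝ := ∑ a : Fin n, ∑ b : Fin n, |w a b| with hW
  have hW0 : 0 ≤ W := Finset.sum_nonneg fun _ _ => Finset.sum_nonneg fun _ _ => abs_nonneg _
  have hWb : ∀ a b : Fin n, |w a b| ≤ W := by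
    intro a b
    calc |w a b| ≤ ∑ b' : Fin n, |w a b'| :=
          Finset.single_le_sum (f := fun b' => |w a b'|) (fun _ _ => abs_nonneg _)
            (Finset.mem_univ b)
      _ ≤ W := Finset.single_le_sum (f := fun a' => ∑ b' : Fin n, |w a' b'|)
            (fun _ _ => Finset.sum_nonneg fun _ _ => abs_nonneg _) (Finset.mem_univ a)
  have hpwb : ∀ p : List (Fin n), |pathWeight w p| ≤ p.length * W := by
    intro p
    induction p with
    | nil => simp [pathWeight_nil]
    | cons a q ih =>
      cases q with
      | nil => simp [pathWeight_single, hW0]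
      | cons b l =>
        rw [pathWeight_cons]
        have h1 := hWb a b
        have habs := abs_add_le (w a b) (pathWeight w (b :: l))
        have hcast : ((b :: l).length : ℝ) + 1 = ((a :: b :: l).length : ℝ) := by
          push_cast [List.length_cons]; ring
        have h2 : |pathWeight w (b :: l)| ≤ (b :: l).length * W := ih
        calc |w a b + pathWeight w (b :: l)| ≤ |w a b| + |pathWeight w (b :: l)| := habs
          _ ≤ W + (b :: l).length * W := add_le_add h1 h2
          _ = (((b :: l).length : ℝ) + 1) * W := by ring
          _ = ((a :: b :: l).length : ℝ) * W := by rw [hcast]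
  have hdb : ∀ v, R v → |d v| ≤ n * W := by
    intro v hv
    obtain ⟨p, hp, hpw⟩ := hmem v hv
    rw [← hpw]
    have h1 := hpwb p
    have h2 : p.Nodup := dag_nodup hdag (hpsub hp).2.2
    have h3 : p.length ≤ n := by simpa using h2.length_le_card
    calc |pathWeight w p| ≤ p.length * W := h1
      _ ≤ n * W := by
          apply mul_le_mul_of_nonneg_right _ hW0
          exact_mod_cast h3
  -- d j = 0
  have hRj : R j := ⟨[j], isPathFrom_single E' j⟩
  have hdj : d j = 0 := by
    have h1 : S j = {0} := by
      apply Set.eq_singleton_iff_unique_mem.mpr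
      refine ⟨⟨[j], isPathFrom_single E' j, rfl⟩, ?_⟩
      rintro y ⟨p, hp, rfl⟩
      have hlen := hdag j p (hpsub hp)
      obtain ⟨h1, _, _⟩ := hp
      match p, hlen with
      | [c], _ =>
        obtain rfl : c = j := by injection h1
        rfl
    rw [hd]
    simp only [h1, csInf_singleton]
  -- topological position
  set pos : Fin n → ℕ := fun v => (Finset.univ.filter (fun u => Reaches E u v)).card with hpos
  have hposn : ∀ v, pos v ≤ n := fun v =>
    le_trans (Finset.card_filter_le _ _) (by simp)
  have hposlt : ∀ a b : Fin n, E a b → pos a < pos b := by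
    intro a b hab
    apply Finset.card_lt_card
    rw [Finset.ssubset_iff_of_subset]
    · refine ⟨b, by simp [reaches_refl], by simp [not_reaches_rev hdag hab]⟩
    · intro u hu
      simp only [Finset.mem_filter, Finset.mem_univ, true_and] at hu ⊢
      exact reaches_step hu hab
  set T : ℝ := W + 1 with hT
  have hT0 : 0 ≤ T := by rw [hT]; linarith
  set K : ℝ := 2 * n * W + T * n + W + 1 with hK
  set x : Fin n → ℝ := fun v => if R v then d v else K - T * pos v with hx
  have hnW0 : 0 ≤ (n : ℝ) * W := mul_nonneg (Nat.cast_nonneg n) hW0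
  -- the generic coercion fact
  have hcoe : ∀ a b : Fin n, a ≠ b → C a b ≠ ⊤ → C a b = ((w b a : ℝ) : Trop) := by
    intro a b _ hC
    rw [hw]
    exact (coe_untop'_eq (C a b) hC).symm
  -- feasibility
  have hfeas : x ∈ wdp (delEdge C i j) := by
    intro a b hab
    by_cases htop : delEdge C i j a b = ⊤
    · rw [htop]; exact le_top
    · have hni : ¬(a = i ∧ b = j) := fun h => htop (by simp [delEdge, h])
      have hCab : C a b ≠ ⊤ := by
        rw [delEdge, if_neg hni] at htop; exact htop
      have hEba : E b a := (hsupp.2 a b hab).1 hCab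
      have hE'ba : E' b a := ⟨hEba, fun h => hni ⟨h.2, h.1⟩⟩
      rw [delEdge, if_neg hni, hcoe a b hab hCab, WithTop.coe_le_coe]
      by_cases hRb : R b
      · have hRa : R a := reaches_step hRb hE'ba
        obtain ⟨p, hp, hpw⟩ := hmem b hRb
        have h2 := hle a (p ++ [a]) (isPathFrom_concat hp hE'ba)
        rw [pathWeight_concat w p b a hp.2.1] at h2
        simp only [hx, if_pos hRa, if_pos hRb]
        linarith
      · by_cases hRa : R a
        · simp only [hx, if_pos hRa, if_neg hRb]
          have h1 : |d a| ≤ n * W := hdb a hRa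
          have h2 : (pos b : ℝ) ≤ n := by exact_mod_cast hposn b
          have h3 := hWb b a
          have h4 : T * (pos b : ℝ) ≤ T * n := mul_le_mul_of_nonneg_left h2 hT0
          have h5 : d a ≤ n * W := (abs_le.mp h1).2
          rw [hK]
          linarith [(abs_le.mp h3).1]
        · simp only [hx, if_neg hRa, if_neg hRb]
          have hlt := hposlt b a hEba
          have h1 : (pos b : ℝ) + 1 ≤ pos a := by exact_mod_cast hlt
          have h3 := hWb b a
          have h6 : -W ≤ w b a := (abs_le.mp h3).1
          have h7 : T * ((pos b : ℝ) + 1) ≤ T * pos a := mul_le_mul_of_nonneg_left h1 hT0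
          rw [hT] at h7 ⊢
          linarith
  -- violation
  have hij : i ≠ j := fun h => dag_irrefl hdag j (h ▸ he)
  have hCij : C i j ≠ ⊤ := (hsupp.2 i j hij).2 he
  have hCijc : C i j = ((w j i : ℝ) : Trop) := hcoe i j hij hCij
  have hxj : x j = 0 := by simp only [hx, if_pos hRj, hdj]
  have hviol : ¬ (((x i - x j : ℝ) : Trop) ≤ C i j) := by
    rw [hCijc, WithTop.coe_le_coe, not_le, hxj, sub_zero]
    by_cases hRi : R i
    · obtain ⟨p, hp, hpw⟩ := hmem i hRi
      have hpE : IsPathFrom E j i p := hpsub hp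
      have hpne : p ≠ [j, i] := by
        rintro rfl
        have hc := hp.2.2
        simp only [List.Chain', List.isChain_cons_cons] at hc
        exact hc.1.2 ⟨rfl, rfl⟩
      have hlt := hwtr.2 p hpE hpne
      simp only [hx, if_pos hRi]
      rw [← hpw]
      exact hlt
    · simp only [hx, if_neg hRi]
      have h1 : (pos i : ℝ) ≤ n := by exact_mod_cast hposn i
      have h2 := hWb j i
      have h3 : w j i ≤ W := (abs_le.mp h2).2
      have h4 : T * (pos i : ℝ) ≤ T * n := mul_le_mul_of_nonneg_left h1 hT0
      rw [hK]
      linarith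
  exact ⟨x, hfeas, fun hxC => hviol (hxC i j hij)⟩

/-- For an edge `j → i` of a weighted DAG `(G, w)` with weight matrix
`C`, letting `C'` be `C` with entry `c_ij` set to `∞`, one has `Q(C) = Q(C')` iff
`j → i ∉ G^♭_w`. -/
theorem stmt5 {n : ℕ} (E : Fin n → Fin n → Prop) (C : Matrix (Fin n) (Fin n) Trop)
    (hdag : IsDAG E) (hsupp : SupportedOn C E) (i j : Fin n) (he : E j i) :
    wdp C = wdp (delEdge C i j) ↔ ¬ InWTR E (cw C) j i := by
  constructor
  · intro heq hwtr
    obtain ⟨x, hx1, hx2⟩ := exists_sep E C hdag hsupp i j he hwtr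
    rw [heq] at hx2
    exact hx2 hx1
  · intro hn
    have hij : i ≠ j := fun h => dag_irrefl hdag j (h ▸ he)
    have hCij : C i j ≠ ⊤ := (hsupp.2 i j hij).2 he
    have hCijc : ((((WithTop.untopD 0 (C i j)) : ℝ)) : Trop) = C i j := coe_untop'_eq (C i j) hCij
    have hex : ∃ p, IsPathFrom E j i p ∧ p ≠ [j, i] ∧ pathWeight (cw C) p ≤ cw C j i := by
      by_contra hc
      push_neg at hc
      exact hn ⟨he, fun p hp hne => hc p hp hne⟩
    obtain ⟨p, hp, hpne, hple⟩ := hex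
    ext x
    constructor
    · intro hx a b hab
      by_cases h : a = i ∧ b = j
      · rw [delEdge]
        simp only [h, and_self, if_true]
        exact le_top
      · rw [delEdge, if_neg h]
        exact hx a b hab
    · intro hx a b hab
      by_cases h : a = i ∧ b = j
      · obtain ⟨rfl, rfl⟩ := h
        have hchain := chain'_del hdag hp hpne
        have hstep : p.Chain' (fun u v => x v - x u ≤ cw C u v) := by
          refine hchain.imp ?_
          intro u v huv
          have hneuv : u ≠ v := edge_ne hdag huv.1
          have h1 := hx v u (Ne.symm hneuv)
          have hdel : delEdge C a b v u = C v u := by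
            rw [delEdge, if_neg (fun hh => huv.2 ⟨hh.2, hh.1⟩)]
          have hCvu : C v u ≠ ⊤ := (hsupp.2 v u (Ne.symm hneuv)).2 huv.1
          have hCvuc : (((cw C u v : ℝ)) : Trop) = C v u := coe_untop'_eq (C v u) hCvu
          rw [hdel, ← hCvuc, WithTop.coe_le_coe] at h1
          exact h1
        have htel := tele x (cw C) p b a hp.1 hp.2.1 hstep
        rw [← hCijc, WithTop.coe_le_coe]
        show x a - x b ≤ cw C b a
        exact le_trans htel hple
      · have := hx a b hab
        rw [delEdge, if_neg h] at this
        exact this
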